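/- arXiv:1507.08987 — 12 statements merged into one kernel-verified Lean document; each statement's English description precedes it below -/
import Mathlib

section
/- Let (X, d, ≤) be an ordered metric space with (X, d) complete, and let f, g be self-maps on X such that: (i) f(X) ⊆ g(X); (ii) f is g-comparable; (iii) the pair (f, g) is compatible; (iv) g is continuous; (v) either f is continuous or (X, d, ≤) has the g-TCC property; (vi) there exists x₀ ∈ X with g(x₀) ≺≻ f(x₀); (vii) there exists α ∈ [0,1) such that d(f(x), f(y)) ≤ α·d(g(x), g(y)) for all x, y ∈ X with g(x) ≺≻ g(y). Then f and g have a coincidence point, i.e., there exists z ∈ X with g(z) = f(z). -/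
open Filter Topology

section

variable {X : Type*} [MetricSpace X] [PartialOrder X]

/-- Two elements of an ordered set are comparable. -/
def Cmp (x y : X) : Prop := x ≤ y ∨ y ≤ x

/-- `f` is `g`-comparable: `g x ≺≻ g y` implies `f x ≺≻ f y`. -/
def GComparable (f g : X → X) : Prop :=
  ∀ x y : X, Cmp (g x) (g y) → Cmp (f x) (f y)

/-- The `g`-TCC property of an ordered metric space. -/
def GTCC (g : X → X) : Prop :=
  ∀ (x : ℕ → X) (l : X), (∀ n, Cmp (x n) (x (n + 1))) →
    Tendsto x atTop (𝓝 l) →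
      ∃ φ : ℕ → ℕ, StrictMono φ ∧ ∀ k, Cmp (g (x (φ k))) (g l)

/-- The TCC property of a subset of an ordered metric space. -/
def TCCOn (Y : Set X) : Prop :=
  ∀ (x : ℕ → X), (∀ n, x n ∈ Y) → ∀ l ∈ Y, (∀ n, Cmp (x n) (x (n + 1))) →
    Tendsto x atTop (𝓝 l) →
      ∃ φ : ℕ → ℕ, StrictMono φ ∧ ∀ k, Cmp (x (φ k)) l

/-- The TCC property of an ordered metric space. -/
def TCC (X : Type*) [MetricSpace X] [PartialOrder X] : Prop :=
  ∀ (x : ℕ → X) (l : X), (∀ n, Cmp (x n) (x (n + 1))) →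
    Tendsto x atTop (𝓝 l) →
      ∃ φ : ℕ → ℕ, StrictMono φ ∧ ∀ k, Cmp (x (φ k)) l

/-- The pair `(f, g)` is compatible. -/
def Compatible (f g : X → X) : Prop :=
  ∀ (x : ℕ → X) (l : X), Tendsto (fun n => g (x n)) atTop (𝓝 l) →
    Tendsto (fun n => f (x n)) atTop (𝓝 l) →
      Tendsto (fun n => dist (g (f (x n))) (f (g (x n)))) atTop (𝓝 0)

/-- `f` is `g`-continuous. -/
def GContinuous (f g : X → X) : Prop :=
  ∀ (x : ℕ → X) (a : X), Tendsto (fun n => g (x n)) atTop (𝓝 (g a)) →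
    Tendsto (fun n => f (x n)) atTop (𝓝 (f a))

/-- There exists a `≺≻`-chain between `a` and `b` inside `E`. -/
def ChainIn (E : Set X) (a b : X) : Prop :=
  ∃ (k : ℕ) (e : ℕ → X), 2 ≤ k ∧ (∀ i < k, e i ∈ E) ∧ e 0 = a ∧ e (k - 1) = b ∧
    ∀ i, i + 1 < k → Cmp (e i) (e (i + 1))

end

/-- Theorem 3.3 (coincidence point, compatible pair). -/
theorem stmt0 {X : Type*} [MetricSpace X] [PartialOrder X] [CompleteSpace X]
    (f g : X → X)
    (h1 : Set.range f ⊆ Set.range g)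
    (h2 : GComparable f g)
    (h3 : Compatible f g)
    (h4 : Continuous g)
    (h5 : Continuous f ∨ GTCC g)
    (h6 : ∃ x₀ : X, Cmp (g x₀) (f x₀))
    (h7 : ∃ α : ℝ, 0 ≤ α ∧ α < 1 ∧
      ∀ x y : X, Cmp (g x) (g y) → dist (f x) (f y) ≤ α * dist (g x) (g y)) :
    ∃ z : X, g z = f z := by
  obtain ⟨x₀, hx₀⟩ := h6
  obtain ⟨α, hα0, hα1, hcon⟩ := h7
  choose G hG using fun a : X => h1 (Set.mem_range_self a)
  let x : ℕ → X := fun n => Nat.rec x₀ (fun _ p => G p) n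
  have hgf : ∀ n, g (x (n + 1)) = f (x n) := fun n => hG (x n)
  have hcmp : ∀ n, Cmp (g (x n)) (g (x (n + 1))) := by
    intro n
    induction n with
    | zero => rw [hgf 0]; exact hx₀
    | succ n ih =>
      rw [hgf (n + 1), hgf n]
      exact h2 _ _ ih
  have hd : ∀ n, dist (g (x n)) (g (x (n + 1))) ≤ dist (g (x 0)) (g (x 1)) * α ^ n := by
    intro n
    induction n with
    | zero => simp
    | succ n ih =>
      have hstep : dist (g (x (n + 1))) (g (x (n + 1 + 1))) ≤
          α * dist (g (x n)) (g (x (n + 1))) := by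
        have hst := hcon (x n) (x (n + 1)) (hcmp n)
        rwa [← hgf n, ← hgf (n + 1)] at hst
      calc dist (g (x (n + 1))) (g (x (n + 1 + 1)))
          ≤ α * dist (g (x n)) (g (x (n + 1))) := hstep
        _ ≤ α * (dist (g (x 0)) (g (x 1)) * α ^ n) :=
            mul_le_mul_of_nonneg_left ih hα0
        _ = dist (g (x 0)) (g (x 1)) * α ^ (n + 1) := by ring
  have hcauchy : CauchySeq (fun n => g (x n)) :=
    cauchySeq_of_le_geometric α _ hα1 hd
  obtain ⟨z, hz⟩ := cauchySeq_tendsto_of_complete hcauchy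
  have hfz : Tendsto (fun n => f (x n)) atTop (𝓝 z) := by
    have h' := hz.comp (tendsto_add_atTop_nat 1)
    exact h'.congr fun n => hgf n
  have hcompat := h3 x z hz hfz
  have hgfz : Tendsto (fun n => g (f (x n))) atTop (𝓝 (g z)) :=
    (h4.tendsto z).comp hfz
  have hfgz : Tendsto (fun n => f (g (x n))) atTop (𝓝 (g z)) :=
    tendsto_of_tendsto_of_dist hgfz hcompat
  have hggz : Tendsto (fun n => g (g (x n))) atTop (𝓝 (g z)) :=
    (h4.tendsto z).comp hz
  rcases h5 with hf | htcc
  · have hfzz : Tendsto (fun n => f (g (x n))) atTop (𝓝 (f z)) :=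
      (hf.tendsto z).comp hz
    exact ⟨z, tendsto_nhds_unique hfgz hfzz⟩
  · obtain ⟨φ, hφ, hφcmp⟩ := htcc (fun n => g (x n)) z hcmp hz
    have hsub : Tendsto (fun k => f (g (x (φ k)))) atTop (𝓝 (g z)) :=
      hfgz.comp hφ.tendsto_atTop
    have hbound : ∀ k, dist (f (g (x (φ k)))) (f z) ≤ α * dist (g (g (x (φ k)))) (g z) :=
      fun k => hcon _ _ (hφcmp k)
    have hto0 : Tendsto (fun k => dist (g (g (x (φ k)))) (g z)) atTop (𝓝 0) := by
      have := (tendsto_iff_dist_tendsto_zero.mp hggz).comp hφ.tendsto_atTop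
      exact this
    have hd0 : Tendsto (fun k => dist (f (g (x (φ k)))) (f z)) atTop (𝓝 0) := by
      refine squeeze_zero (fun k => dist_nonneg) hbound ?_
      simpa using hto0.const_mul α
    have hsub' : Tendsto (fun k => f (g (x (φ k)))) atTop (𝓝 (f z)) :=
      tendsto_iff_dist_tendsto_zero.mpr hd0
    exact ⟨z, tendsto_nhds_unique hsub hsub'⟩
end

section
/- Let (X, d, ≤) be an ordered metric space with (X, d) complete, and let f, g be self-maps on X such that: (i) f(X) ⊆ g(X); (ii) f is g-comparable; (iii) the pair (f, g) is weakly commuting; (iv) g is continuous; (v) either f is continuous or (X, d, ≤) has the g-TCC property; (vi) there exists x₀ ∈ X with g(x₀) ≺≻ f(x₀); (vii) there exists α ∈ [0,1) such that d(f(x), f(y)) ≤ α·d(g(x), g(y)) for all x, y ∈ X with g(x) ≺≻ g(y). Then f and g have a coincidence point, i.e., there exists z ∈ X with g(z) = f(z). -/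
open Filter Topology

/-- Corollary 3.4 (coincidence point, weakly commuting pair). -/
theorem stmt1 {X : Type*} [MetricSpace X] [PartialOrder X] [CompleteSpace X]
    (f g : X → X)
    (h1 : Set.range f ⊆ Set.range g)
    (h2 : GComparable f g)
    (h3 : ∀ x : X, dist (g (f x)) (f (g x)) ≤ dist (g x) (f x))
    (h4 : Continuous g)
    (h5 : Continuous f ∨ GTCC g)
    (h6 : ∃ x₀ : X, Cmp (g x₀) (f x₀))
    (h7 : ∃ α : ℝ, 0 ≤ α ∧ α < 1 ∧
      ∀ x y : X, Cmp (g x) (g y) → dist (f x) (f y) ≤ α * dist (g x) (g y)) :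
    ∃ z : X, g z = f z := by
  obtain ⟨x₀, hx₀⟩ := h6
  obtain ⟨α, hα0, hα1, hcon⟩ := h7
  have hch : ∀ a : X, ∃ b, g b = f a := fun a => h1 ⟨a, rfl⟩
  choose nxt hnxt using hch
  set x : ℕ → X := fun n => nxt^[n] x₀ with hxdef
  have hrec : ∀ n, g (x (n + 1)) = f (x n) := by
    intro n
    show g (nxt^[n + 1] x₀) = f (nxt^[n] x₀)
    rw [Function.iterate_succ_apply', hnxt]
  have hcmp : ∀ n, Cmp (g (x n)) (g (x (n + 1))) := by
    intro n
    induction n with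
    | zero => rw [hrec 0]; exact hx₀
    | succ n ih => rw [hrec (n + 1), hrec n]; exact h2 _ _ ih
  have hd : ∀ n, dist (g (x n)) (g (x (n + 1))) ≤ dist (g (x 0)) (g (x 1)) * α ^ n := by
    intro n
    induction n with
    | zero => simp
    | succ n ih =>
      rw [hrec (n + 1), hrec n]
      calc dist (f (x n)) (f (x (n + 1))) ≤ α * dist (g (x n)) (g (x (n + 1))) :=
            hcon _ _ (hcmp n)
        _ ≤ α * (dist (g (x 0)) (g (x 1)) * α ^ n) := by
            exact mul_le_mul_of_nonneg_left ih hα0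
        _ = dist (g (x 0)) (g (x 1)) * α ^ (n + 1) := by ring
  have hcauchy : CauchySeq (fun n => g (x n)) :=
    cauchySeq_of_le_geometric α (dist (g (x 0)) (g (x 1))) hα1 hd
  obtain ⟨z, hgz⟩ := cauchySeq_tendsto_of_complete hcauchy
  have hfz : Tendsto (fun n => f (x n)) atTop (𝓝 z) := by
    exact (hgz.comp (tendsto_add_atTop_nat 1)).congr (fun n => hrec n)
  have h0 : Tendsto (fun n => dist (g (x n)) (f (x n))) atTop (𝓝 0) := by
    simpa using hgz.dist hfz
  have hgfz : Tendsto (fun n => g (f (x n))) atTop (𝓝 (g z)) := (h4.tendsto z).comp hfz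
  rcases h5 with hf | htcc
  · -- f continuous
    have hfgz : Tendsto (fun n => f (g (x n))) atTop (𝓝 (f z)) := (hf.tendsto z).comp hgz
    have hdd : Tendsto (fun n => dist (g (f (x n))) (f (g (x n)))) atTop
        (𝓝 (dist (g z) (f z))) := hgfz.dist hfgz
    have hle : dist (g z) (f z) ≤ 0 :=
      le_of_tendsto_of_tendsto' hdd h0 (fun n => h3 (x n))
    exact ⟨z, dist_le_zero.mp hle⟩
  · -- g-TCC
    have hggz : Tendsto (fun n => g (g (x n))) atTop (𝓝 (g z)) := (h4.tendsto z).comp hgz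
    have hfgz : Tendsto (fun n => f (g (x n))) atTop (𝓝 (g z)) := by
      rw [tendsto_iff_dist_tendsto_zero]
      apply squeeze_zero (fun n => dist_nonneg)
        (g := fun n => dist (g (x n)) (f (x n)) + dist (g (f (x n))) (g z))
      · intro n
        calc dist (f (g (x n))) (g z)
            ≤ dist (f (g (x n))) (g (f (x n))) + dist (g (f (x n))) (g z) := dist_triangle _ _ _
          _ ≤ dist (g (x n)) (f (x n)) + dist (g (f (x n))) (g z) := by
              rw [dist_comm (f (g (x n)))]
              exact add_le_add_left (h3 (x n)) _
      · simpa using h0.add (by simpa using hgfz.dist (tendsto_const_nhds (x := g z)))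
    obtain ⟨φ, hφ, hcφ⟩ := htcc (fun n => g (x n)) z hcmp hgz
    have hsub : Tendsto (fun k => f (g (x (φ k)))) atTop (𝓝 (g z)) :=
      hfgz.comp hφ.tendsto_atTop
    have hsub2 : Tendsto (fun k => f (g (x (φ k)))) atTop (𝓝 (f z)) := by
      rw [tendsto_iff_dist_tendsto_zero]
      apply squeeze_zero (fun k => dist_nonneg)
        (g := fun k => α * dist (g (g (x (φ k)))) (g z))
      · intro k; exact hcon _ _ (hcφ k)
      · have : Tendsto (fun k => dist (g (g (x (φ k)))) (g z)) atTop (𝓝 0) := by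
          simpa using (hggz.comp hφ.tendsto_atTop).dist (tendsto_const_nhds (x := g z))
        simpa using this.const_mul α
    exact ⟨z, (tendsto_nhds_unique hsub2 hsub).symm⟩
end

section
/- Let (X, d, ≤) be an ordered metric space with (X, d) complete, and let f, g be self-maps on X such that: (i) f(X) ⊆ g(X); (ii) f is g-comparable; (iii) the pair (f, g) is compatible; (iv) g is continuous; (v) either f is continuous or (X, d, ≤) has the g-TCC property; (vi) there exists x₀ ∈ X with g(x₀) ≺≻ f(x₀); (vii) there exists α ∈ [0,1) such that d(f(x), f(y)) ≤ α·d(g(x), g(y)) for all x, y ∈ X with g(x) ≺≻ g(y); (u₀) for each x, y ∈ X, the set C(f(x), f(y), ≺≻, g(X)) of ≺≻-chains between f(x) and f(y) in g(X) is nonempty. Then f and g have a unique common fixed point. -/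
open Filter Topology

/-- Theorem 4.6 (unique common fixed point, compatible pair). -/
theorem stmt9 {X : Type*} [MetricSpace X] [PartialOrder X] [CompleteSpace X]
    (f g : X → X)
    (h1 : Set.range f ⊆ Set.range g)
    (h2 : GComparable f g)
    (h3 : Compatible f g)
    (h4 : Continuous g)
    (h5 : Continuous f ∨ GTCC g)
    (h6 : ∃ x₀ : X, Cmp (g x₀) (f x₀))
    (h7 : ∃ α : ℝ, 0 ≤ α ∧ α < 1 ∧
      ∀ x y : X, Cmp (g x) (g y) → dist (f x) (f y) ≤ α * dist (g x) (g y))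
    (hu0 : ∀ x y : X, ChainIn (Set.range g) (f x) (f y)) :
    ∃! x : X, g x = x ∧ f x = x := by
  classical
  obtain ⟨α, hα0, hα1, hcontr⟩ := h7
  obtain ⟨x₀, hx₀⟩ := h6
  have hcmp_refl : ∀ c : X, Cmp c c := fun c => Or.inl le_rfl
  -- step function: g (step a) = f a
  have hstep' : ∀ a : X, ∃ b, g b = f a := fun a => h1 ⟨a, rfl⟩
  choose step hgstep using hstep'
  set seq : X → ℕ → X := fun a n => step^[n] a with hseq
  have hseq0 : ∀ a, seq a 0 = a := fun a => rfl
  have hseqS : ∀ a n, g (seq a (n + 1)) = f (seq a n) := by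
    intro a n
    simp only [hseq, Function.iterate_succ_apply']
    exact hgstep _
  -- comparability propagates along iteration
  have hcmp_prop : ∀ a b : X, Cmp (g a) (g b) → ∀ n, Cmp (g (seq a n)) (g (seq b n)) := by
    intro a b hab n
    induction n with
    | zero => exact hab
    | succ n ih =>
      rw [hseqS, hseqS]
      exact h2 _ _ ih
  -- geometric decay of distances along iteration
  have hdist : ∀ a b : X, Cmp (g a) (g b) → ∀ n,
      dist (g (seq a n)) (g (seq b n)) ≤ α ^ n * dist (g a) (g b) := by
    intro a b hab n
    induction n with
    | zero => rw [pow_zero, one_mul, hseq0, hseq0]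
    | succ n ih =>
      rw [hseqS, hseqS]
      calc dist (f (seq a n)) (f (seq b n)) ≤ α * dist (g (seq a n)) (g (seq b n)) :=
            hcontr _ _ (hcmp_prop a b hab n)
        _ ≤ α * (α ^ n * dist (g a) (g b)) := by
            exact mul_le_mul_of_nonneg_left ih hα0
        _ = α ^ (n + 1) * dist (g a) (g b) := by ring
  -- iteration from a coincidence point is stationary (in g- and f-values)
  have hfix : ∀ a : X, g a = f a → ∀ n, g (seq a n) = g a ∧ f (seq a n) = f a := by
    intro a ha n
    induction n with
    | zero => exact ⟨rfl, rfl⟩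
    | succ n ih =>
      have hg : g (seq a (n + 1)) = g a := by rw [hseqS, ih.2, ← ha]
      refine ⟨hg, ?_⟩
      have hcmp : Cmp (g (seq a (n + 1))) (g a) := by rw [hg]; exact hcmp_refl _
      have := hcontr _ a hcmp
      rw [hg] at this
      simp only [dist_self, mul_zero] at this
      have : dist (f (seq a (n + 1))) (f a) = 0 :=
        le_antisymm this dist_nonneg
      exact dist_eq_zero.mp this
  -- uniqueness of coincidence values
  have hcoinc_unique : ∀ a b : X, g a = f a → g b = f b → g a = g b := by
    intro a b ha hb
    obtain ⟨k, e, hk2, hmem, he0, hek, hchain⟩ := hu0 a b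
    have hz' : ∀ i : ℕ, ∃ c : X, i < k → g c = e i := by
      intro i
      by_cases hi : i < k
      · obtain ⟨c, hc⟩ := hmem i hi
        exact ⟨c, fun _ => hc⟩
      · exact ⟨a, fun h => absurd h hi⟩
    choose z hz using hz'
    set w : ℕ → X := fun i => if i = 0 then a else if i = k - 1 then b else z i with hw
    have hgw : ∀ i, i < k → g (w i) = e i := by
      intro i hi
      by_cases h0 : i = 0
      · simp only [hw, h0, if_pos rfl]
        rw [ha, ← he0]
      · by_cases h1 : i = k - 1
        · subst h1
          have hwb : w (k - 1) = b := by simp [hw, h0]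
          rw [hwb, hb, ← hek]
        · simp only [hw, if_neg h0, if_neg h1]
          exact hz i hi
    have hw0 : w 0 = a := by simp [hw]
    have hwk : w (k - 1) = b := by
      have : k - 1 ≠ 0 := by omega
      simp [hw, this]
    -- bound
    have hbound : ∀ n : ℕ, dist (g a) (g b) ≤
        α ^ n * ∑ i ∈ Finset.range (k - 1), dist (e i) (e (i + 1)) := by
      intro n
      have h0 : g (seq (w 0) n) = g a := by
        rw [hw0]; exact (hfix a ha n).1
      have h1 : g (seq (w (k - 1)) n) = g b := by
        rw [hwk]; exact (hfix b hb n).1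
      calc dist (g a) (g b) = dist (g (seq (w 0) n)) (g (seq (w (k - 1)) n)) := by
            rw [h0, h1]
        _ ≤ ∑ i ∈ Finset.range (k - 1),
              dist (g (seq (w i) n)) (g (seq (w (i + 1)) n)) :=
            dist_le_range_sum_dist (fun i => g (seq (w i) n)) (k - 1)
        _ ≤ ∑ i ∈ Finset.range (k - 1), α ^ n * dist (e i) (e (i + 1)) := by
            apply Finset.sum_le_sum
            intro i hi
            have hik : i + 1 < k := by
              have := Finset.mem_range.mp hi; omega
            have hcmp : Cmp (g (w i)) (g (w (i + 1))) := by
              rw [hgw i (by omega), hgw (i + 1) hik]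
              exact hchain i hik
            have := hdist (w i) (w (i + 1)) hcmp n
            rwa [hgw i (by omega), hgw (i + 1) hik] at this
        _ = α ^ n * ∑ i ∈ Finset.range (k - 1), dist (e i) (e (i + 1)) := by
            rw [Finset.mul_sum]
      done
    have hlim : Tendsto (fun n : ℕ => α ^ n *
        ∑ i ∈ Finset.range (k - 1), dist (e i) (e (i + 1))) atTop (𝓝 0) := by
      have := tendsto_pow_atTop_nhds_zero_of_lt_one hα0 hα1
      simpa using this.mul_const _
    have : dist (g a) (g b) ≤ 0 := ge_of_tendsto' hlim fun n => hbound n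
    have : dist (g a) (g b) = 0 := le_antisymm this dist_nonneg
    exact dist_eq_zero.mp this
  -- the Picard sequence
  set x : ℕ → X := fun n => seq x₀ n with hx
  have hshift : ∀ n, x (n + 1) = seq (step x₀) n := by
    intro n; simp only [hx, hseq, Function.iterate_succ_apply]
  have hxS : ∀ n, g (x (n + 1)) = f (x n) := fun n => hseqS x₀ n
  have hcmpx : ∀ n, Cmp (g (x n)) (g (x (n + 1))) := by
    intro n
    rw [hshift n]
    apply hcmp_prop
    rw [hgstep]
    exact hx₀
  -- Cauchy
  have hcauchy : CauchySeq (fun n => g (x n)) := by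
    apply cauchySeq_of_le_geometric (r := α) (C := dist (g x₀) (f x₀)) hα1
    intro n
    have hc : Cmp (g x₀) (g (step x₀)) := by rw [hgstep]; exact hx₀
    have := hdist x₀ (step x₀) hc n
    rw [← hshift n] at this
    calc dist (g (x n)) (g (x (n + 1))) ≤ α ^ n * dist (g x₀) (g (step x₀)) := this
      _ = dist (g x₀) (f x₀) * α ^ n := by rw [hgstep]; ring
  obtain ⟨z, hgz⟩ := cauchySeq_tendsto_of_complete hcauchy
  have hfz : Tendsto (fun n => f (x n)) atTop (𝓝 z) := by
    have : Tendsto (fun n => g (x (n + 1))) atTop (𝓝 z) :=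
      hgz.comp (tendsto_add_atTop_nat 1)
    simpa only [hxS] using this
  -- compatibility
  have hcompat := h3 x z hgz hfz
  have hgfx : Tendsto (fun n => g (f (x n))) atTop (𝓝 (g z)) :=
    (h4.tendsto z).comp hfz
  have hfgx : Tendsto (fun n => f (g (x n))) atTop (𝓝 (g z)) :=
    hgfx.congr_dist hcompat
  -- coincidence: f z = g z
  have hco : f z = g z := by
    rcases h5 with hf | htcc
    · have : Tendsto (fun n => f (g (x n))) atTop (𝓝 (f z)) :=
        (hf.tendsto z).comp hgz
      exact tendsto_nhds_unique this hfgx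
    · obtain ⟨φ, hφ, hφcmp⟩ := htcc (fun n => g (x n)) z hcmpx hgz
      have hsub : Tendsto (fun k => g (x (φ k))) atTop (𝓝 z) :=
        hgz.comp hφ.tendsto_atTop
      have hggx : Tendsto (fun k => g (g (x (φ k)))) atTop (𝓝 (g z)) :=
        (h4.tendsto z).comp hsub
      have hfg1 : Tendsto (fun k => f (g (x (φ k)))) atTop (𝓝 (f z)) := by
        rw [tendsto_iff_dist_tendsto_zero]
        apply squeeze_zero (fun k => dist_nonneg)
          (fun k => hcontr (g (x (φ k))) z (hφcmp k))
        have : Tendsto (fun k => α * dist (g (g (x (φ k)))) (g z)) atTop (𝓝 (α * 0)) := by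
          apply Tendsto.const_mul
          exact tendsto_iff_dist_tendsto_zero.mp hggx
        simpa using this
      have hfg2 : Tendsto (fun k => f (g (x (φ k)))) atTop (𝓝 (g z)) :=
        hfgx.comp hφ.tendsto_atTop
      exact tendsto_nhds_unique hfg1 hfg2
  -- commutation at coincidence point
  have hcomm : g (f z) = f (g z) := by
    have h3' := h3 (fun _ => z) (g z)
      (by simpa using (tendsto_const_nhds : Tendsto (fun _ : ℕ => g z) atTop (𝓝 (g z))))
      (by rw [← hco]; exact tendsto_const_nhds)
    have hconst : Tendsto (fun _ : ℕ => dist (g (f z)) (f (g z))) atTop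
        (𝓝 (dist (g (f z)) (f (g z)))) := tendsto_const_nhds
    have : dist (g (f z)) (f (g z)) = 0 := tendsto_nhds_unique hconst (by simpa using h3')
    exact dist_eq_zero.mp this
  -- g z is the common fixed point
  have htco : g (g z) = f (g z) := by
    calc g (g z) = g (f z) := by rw [hco]
      _ = f (g z) := hcomm
  have hgzt : g z = g (g z) := hcoinc_unique z (g z) hco.symm htco
  have hgt : g (g z) = g z := hgzt.symm
  have hft : f (g z) = g z := by rw [← htco, hgt]
  refine ⟨g z, ⟨hgt, hft⟩, ?_⟩
  rintro y ⟨hgy, hfy⟩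
  have h := hcoinc_unique y (g z) (by rw [hgy, hfy]) htco
  rw [hgy, hgt] at h
  exact h
end

section
/- Let (X, d, ≤) be an ordered metric space with (X, d) complete, and let f, g be self-maps on X such that: (i) f(X) ⊆ g(X); (ii) f is g-comparable; (iii) the pair (f, g) is compatible; (iv) g is continuous; (v) either f is continuous or (X, d, ≤) has the g-TCC property; (vi) there exists x₀ ∈ X with g(x₀) ≺≻ f(x₀); (vii) there exists α ∈ [0,1) such that d(f(x), f(y)) ≤ α·d(g(x), g(y)) for all x, y ∈ X with g(x) ≺≻ g(y). If in addition (X, ≤) is (f, g)-directed, then f and g have a unique common fixed point. -/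
open Filter Topology

/-- Auxiliary: if `x` is a coincidence point and `Cmp (g x) (g z)`, then the Picard-type
sequence starting at `z` has `g`-images converging to `g x`. -/
theorem aux_tendsto {X : Type*} [MetricSpace X] [PartialOrder X]
    (f g T : X → X) (hT : ∀ a, g (T a) = f a) (h2 : GComparable f g)
    {α : ℝ} (hα0 : 0 ≤ α) (hα1 : α < 1)
    (hcontr : ∀ x y : X, Cmp (g x) (g y) → dist (f x) (f y) ≤ α * dist (g x) (g y))
    (x z : X) (hx : f x = g x) (hc : Cmp (g x) (g z)) :
    Tendsto (fun n => g (T^[n] z)) atTop (𝓝 (g x)) := by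
  have hcmp : ∀ n, Cmp (g x) (g (T^[n] z)) := by
    intro n
    induction n with
    | zero => simpa using hc
    | succ n ih =>
      have h := h2 x (T^[n] z) ih
      rw [hx, ← hT (T^[n] z)] at h
      simpa [Function.iterate_succ_apply'] using h
  have hbound : ∀ n, dist (g (T^[n] z)) (g x) ≤ dist (g z) (g x) * α ^ n := by
    intro n
    induction n with
    | zero => simp
    | succ n ih =>
      have h1 := hcontr x (T^[n] z) (hcmp n)
      rw [hx] at h1
      calc dist (g (T^[n+1] z)) (g x)
          = dist (g x) (f (T^[n] z)) := by
            rw [Function.iterate_succ_apply', hT, dist_comm]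
        _ ≤ α * dist (g x) (g (T^[n] z)) := h1
        _ = α * dist (g (T^[n] z)) (g x) := by rw [dist_comm]
        _ ≤ α * (dist (g z) (g x) * α ^ n) := mul_le_mul_of_nonneg_left ih hα0
        _ = dist (g z) (g x) * α ^ (n + 1) := by ring
  rw [tendsto_iff_dist_tendsto_zero]
  apply squeeze_zero (fun n => dist_nonneg) hbound
  have h := tendsto_const_nhds.mul
    (tendsto_pow_atTop_nhds_zero_of_lt_one hα0 hα1)
    (f := fun _ : ℕ => dist (g z) (g x))
  simpa using h

/-- Corollary 4.7 with (u₀²) : `(X, ≤)` is `(f,g)`-directed, unique common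
fixed point. -/
theorem stmt11 {X : Type*} [MetricSpace X] [PartialOrder X] [CompleteSpace X]
    (f g : X → X)
    (h1 : Set.range f ⊆ Set.range g)
    (h2 : GComparable f g)
    (h3 : Compatible f g)
    (h4 : Continuous g)
    (h5 : Continuous f ∨ GTCC g)
    (h6 : ∃ x₀ : X, Cmp (g x₀) (f x₀))
    (h7 : ∃ α : ℝ, 0 ≤ α ∧ α < 1 ∧
      ∀ x y : X, Cmp (g x) (g y) → dist (f x) (f y) ≤ α * dist (g x) (g y))
    (hdir : ∀ x y : X, ∃ z : X, Cmp (f x) (g z) ∧ Cmp (f y) (g z)) :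
    ∃! x : X, g x = x ∧ f x = x := by
  obtain ⟨α, hα0, hα1, hcontr⟩ := h7
  obtain ⟨x₀, hx₀⟩ := h6
  choose T hT using fun x : X => Set.mem_range.mp (h1 (Set.mem_range_self x))
  -- hT : ∀ x, g (T x) = f x
  set u : ℕ → X := fun n => T^[n] x₀ with hu
  have hgu : ∀ n, g (u (n + 1)) = f (u n) := by
    intro n
    simp only [hu, Function.iterate_succ_apply']
    exact hT _
  have hcmp : ∀ n, Cmp (g (u n)) (g (u (n + 1))) := by
    intro n
    induction n with
    | zero => rw [hgu 0]; simpa [hu] using hx₀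
    | succ n ih =>
      rw [hgu n, hgu (n + 1)]
      exact h2 _ _ ih
  have hdistbound : ∀ n, dist (g (u n)) (g (u (n + 1))) ≤
      dist (g (u 0)) (g (u 1)) * α ^ n := by
    intro n
    induction n with
    | zero => simp
    | succ n ih =>
      calc dist (g (u (n + 1))) (g (u (n + 2)))
          = dist (f (u n)) (f (u (n + 1))) := by rw [hgu n, hgu (n + 1)]
        _ ≤ α * dist (g (u n)) (g (u (n + 1))) := hcontr _ _ (hcmp n)
        _ ≤ α * (dist (g (u 0)) (g (u 1)) * α ^ n) :=
            mul_le_mul_of_nonneg_left ih hα0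
        _ = dist (g (u 0)) (g (u 1)) * α ^ (n + 1) := by ring
  have hcauchy : CauchySeq (fun n => g (u n)) :=
    cauchySeq_of_le_geometric α _ hα1 hdistbound
  obtain ⟨z, hz⟩ := cauchySeq_tendsto_of_complete hcauchy
  have hfz : Tendsto (fun n => f (u n)) atTop (𝓝 z) := by
    have heq : (fun n => f (u n)) = fun n => g (u (n + 1)) :=
      funext fun n => (hgu n).symm
    rw [heq]
    exact hz.comp (tendsto_add_atTop_nat 1)
  have hcompat := h3 u z hz hfz
  have hgfu : Tendsto (fun n => g (f (u n))) atTop (𝓝 (g z)) :=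
    (h4.tendsto z).comp hfz
  have hfgu : Tendsto (fun n => f (g (u n))) atTop (𝓝 (g z)) := by
    rw [tendsto_iff_dist_tendsto_zero]
    apply squeeze_zero (fun n => dist_nonneg)
      (fun n => dist_triangle (f (g (u n))) (g (f (u n))) (g z))
    have h1' : Tendsto (fun n => dist (f (g (u n))) (g (f (u n)))) atTop (𝓝 0) := by
      simpa [dist_comm] using hcompat
    have h2' : Tendsto (fun n => dist (g (f (u n))) (g z)) atTop (𝓝 0) :=
      tendsto_iff_dist_tendsto_zero.mp hgfu
    simpa using h1'.add h2'
  have hcoinc : f z = g z := by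
    rcases h5 with hf | htcc
    · exact tendsto_nhds_unique ((hf.tendsto z).comp hz) hfgu
    · obtain ⟨φ, hφ, hφc⟩ := htcc (fun n => g (u n)) z hcmp hz
      have hggu : Tendsto (fun n => g (g (u n))) atTop (𝓝 (g z)) :=
        (h4.tendsto z).comp hz
      have hsub : Tendsto (fun k => f (g (u (φ k)))) atTop (𝓝 (g z)) :=
        hfgu.comp hφ.tendsto_atTop
      have hsub2 : Tendsto (fun k => f (g (u (φ k)))) atTop (𝓝 (f z)) := by
        rw [tendsto_iff_dist_tendsto_zero]
        apply squeeze_zero (fun k => dist_nonneg)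
          (fun k => hcontr (g (u (φ k))) z (hφc k))
        have h' : Tendsto (fun k => α * dist (g (g (u (φ k)))) (g z)) atTop
            (𝓝 (α * 0)) :=
          tendsto_const_nhds.mul
            ((tendsto_iff_dist_tendsto_zero.mp hggu).comp hφ.tendsto_atTop)
        simpa using h'
      exact tendsto_nhds_unique hsub2 hsub
  -- weak compatibility at the coincidence point
  have hweak : g (f z) = f (g z) := by
    have hc2 : Tendsto (fun _ : ℕ => f z) atTop (𝓝 (g z)) := by
      rw [hcoinc]; exact tendsto_const_nhds
    have h3' := h3 (fun _ => z) (g z) tendsto_const_nhds hc2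
    have hd : dist (g (f z)) (f (g z)) = 0 :=
      tendsto_nhds_unique tendsto_const_nhds h3'
    exact eq_of_dist_eq_zero hd
  -- all coincidence values coincide
  have hBB : ∀ a b : X, f a = g a → f b = g b → f a = f b := by
    intro a b ha hb
    obtain ⟨c, hca, hcb⟩ := hdir a b
    have hca' : Cmp (g a) (g c) := by rw [← ha]; exact hca
    have hcb' : Cmp (g b) (g c) := by rw [← hb]; exact hcb
    have t1 := aux_tendsto f g T hT h2 hα0 hα1 hcontr a c ha hca'
    have t2 := aux_tendsto f g T hT h2 hα0 hα1 hcontr b c hb hcb'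
    rw [ha, hb]
    exact tendsto_nhds_unique t1 t2
  set w := f z with hw
  have hgw : g w = f w := by
    rw [hw, hweak, ← hcoinc]
  have hfww : f w = w := by
    rw [hw]
    exact (hBB w z hgw.symm hcoinc).symm ▸ (hBB w z hgw.symm hcoinc)
  have hgww : g w = w := by rw [hgw, hfww]
  refine ⟨w, ⟨hgww, hfww⟩, ?_⟩
  rintro y ⟨hgy, hfy⟩
  have hy : f y = g y := hfy.trans hgy.symm
  have := hBB y w hy hgw.symm
  rw [hfy, hfww] at this
  exact this
end

section
/- Let (X, d, ≤) be an ordered metric space with (X, d) complete, and let f be a self-map on X such that: (a) f is comparable; (b) either f is continuous or (X, d, ≤) has the TCC property; (c) there exists x₀ ∈ X with x₀ ≺≻ f(x₀); (d) there exists α ∈ [0,1) such that d(f(x), f(y)) ≤ α·d(x, y) for all x, y ∈ X with x ≺≻ y. Then f has a fixed point. -/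
open Filter Topology

/-- Corollary 5.1, existence part. -/
theorem stmt12 {X : Type*} [MetricSpace X] [PartialOrder X] [CompleteSpace X]
    (f : X → X)
    (ha : ∀ x y : X, Cmp x y → Cmp (f x) (f y))
    (hb : Continuous f ∨ TCC X)
    (hc : ∃ x₀ : X, Cmp x₀ (f x₀))
    (hd : ∃ α : ℝ, 0 ≤ α ∧ α < 1 ∧
      ∀ x y : X, Cmp x y → dist (f x) (f y) ≤ α * dist x y) :
    ∃ x : X, f x = x := by
  obtain ⟨x₀, hc⟩ := hc
  obtain ⟨α, hα0, hα1, hcontr⟩ := hd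
  set x : ℕ → X := fun n => f^[n] x₀ with hxdef
  have hcmp : ∀ n, Cmp (x n) (x (n + 1)) := by
    intro n
    induction n with
    | zero => simpa [x] using hc
    | succ n ih =>
      have := ha _ _ ih
      simpa [x, Function.iterate_succ_apply'] using this
  have hdist : ∀ n, dist (x n) (x (n + 1)) ≤ dist x₀ (f x₀) * α ^ n := by
    intro n; induction n with
    | zero => simp [x]
    | succ n ih =>
      have h1 : dist (x (n + 1)) (x (n + 2)) ≤ α * dist (x n) (x (n + 1)) := by
        have := hcontr _ _ (hcmp n)
        simpa [x, Function.iterate_succ_apply'] using this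
      calc dist (x (n + 1)) (x (n + 2)) ≤ α * dist (x n) (x (n + 1)) := h1
        _ ≤ α * (dist x₀ (f x₀) * α ^ n) := mul_le_mul_of_nonneg_left ih hα0
        _ = dist x₀ (f x₀) * α ^ (n + 1) := by ring
  have hcauchy : CauchySeq x := cauchySeq_of_le_geometric α _ hα1 hdist
  obtain ⟨l, hl⟩ := cauchySeq_tendsto_of_complete hcauchy
  have hshift : (fun n => f (x n)) = fun n => x (n + 1) := by
    funext n; simp [x, Function.iterate_succ_apply']
  rcases hb with hf | htcc
  · refine ⟨l, ?_⟩
    have h2 : Tendsto (fun n => x (n + 1)) atTop (𝓝 l) :=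
      hl.comp (tendsto_add_atTop_nat 1)
    have h3 : Tendsto (fun n => f (x n)) atTop (𝓝 (f l)) := (hf.tendsto l).comp hl
    rw [hshift] at h3
    exact tendsto_nhds_unique h3 h2
  · obtain ⟨φ, hφ, hcl⟩ := htcc x l hcmp hl
    refine ⟨l, ?_⟩
    have h1 : Tendsto (fun k => x (φ k)) atTop (𝓝 l) := hl.comp hφ.tendsto_atTop
    have h2 : Tendsto (fun k => f (x (φ k))) atTop (𝓝 l) := by
      have h2' : Tendsto (fun k => x (φ k + 1)) atTop (𝓝 l) :=
        (hl.comp (tendsto_add_atTop_nat 1)).comp hφ.tendsto_atTop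
      convert h2' using 2 with k
      simp [x, Function.iterate_succ_apply']
    have h3 : Tendsto (fun k => f (x (φ k))) atTop (𝓝 (f l)) := by
      rw [tendsto_iff_dist_tendsto_zero]
      have hbd : ∀ k, dist (f (x (φ k))) (f l) ≤ α * dist (x (φ k)) l :=
        fun k => hcontr _ _ (hcl k)
      have hlim : Tendsto (fun k => α * dist (x (φ k)) l) atTop (𝓝 (α * 0)) :=
        tendsto_const_nhds.mul (tendsto_iff_dist_tendsto_zero.1 h1)
      rw [mul_zero] at hlim
      exact squeeze_zero (fun k => dist_nonneg) hbd hlim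
    exact tendsto_nhds_unique h3 h2
end

section
/- Let (X, d, ≤) be an ordered metric space with (X, d) complete, and let f be a self-map on X such that: (a) f is comparable; (b) either f is continuous or (X, d, ≤) has the TCC property; (c) there exists x₀ ∈ X with x₀ ≺≻ f(x₀); (d) there exists α ∈ [0,1) such that d(f(x), f(y)) ≤ α·d(x, y) for all x, y ∈ X with x ≺≻ y; (e) for each x, y ∈ X, the set C(f(x), f(y), ≺≻) of ≺≻-chains between f(x) and f(y) in X is nonempty. Then f has a unique fixed point. -/
open Filter Topology

/-- Corollary 5.1, uniqueness part. -/
theorem stmt13 {X : Type*} [MetricSpace X] [PartialOrder X] [CompleteSpace X]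
    (f : X → X)
    (ha : ∀ x y : X, Cmp x y → Cmp (f x) (f y))
    (hb : Continuous f ∨ TCC X)
    (hc : ∃ x₀ : X, Cmp x₀ (f x₀))
    (hd : ∃ α : ℝ, 0 ≤ α ∧ α < 1 ∧
      ∀ x y : X, Cmp x y → dist (f x) (f y) ≤ α * dist x y)
    (he : ∀ x y : X, ChainIn (Set.univ : Set X) (f x) (f y)) :
    ∃! x : X, f x = x := by
  obtain ⟨α, hα0, hα1, hcon⟩ := hd
  have hcmp_it : ∀ n, ∀ a b : X, Cmp a b → Cmp (f^[n] a) (f^[n] b) := by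
    intro n
    induction n with
    | zero => intro a b h; simpa using h
    | succ n ih =>
      intro a b h
      simp only [Function.iterate_succ', Function.comp_apply]
      exact ha _ _ (ih a b h)
  have hdist_it : ∀ n, ∀ a b : X, Cmp a b →
      dist (f^[n] a) (f^[n] b) ≤ α ^ n * dist a b := by
    intro n
    induction n with
    | zero => intro a b h; simp
    | succ n ih =>
      intro a b h
      simp only [Function.iterate_succ', Function.comp_apply]
      calc dist (f (f^[n] a)) (f (f^[n] b)) ≤ α * dist (f^[n] a) (f^[n] b) :=
            hcon _ _ (hcmp_it n a b h)
        _ ≤ α * (α ^ n * dist a b) :=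
            mul_le_mul_of_nonneg_left (ih a b h) hα0
        _ = α ^ (n + 1) * dist a b := by ring
  obtain ⟨x₀, hx₀⟩ := hc
  set u : ℕ → X := fun n => f^[n] x₀ with hu
  have hucmp : ∀ n, Cmp (u n) (u (n + 1)) := by
    intro n
    have := hcmp_it n x₀ (f x₀) hx₀
    simpa [hu, Function.iterate_succ_apply] using this
  have hcauchy : CauchySeq u := by
    apply cauchySeq_of_le_geometric α (dist x₀ (f x₀)) hα1
    intro n
    have := hdist_it n x₀ (f x₀) hx₀
    calc dist (u n) (u (n + 1)) = dist (f^[n] x₀) (f^[n] (f x₀)) := by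
          rw [hu]; simp [Function.iterate_succ_apply]
      _ ≤ α ^ n * dist x₀ (f x₀) := this
      _ = dist x₀ (f x₀) * α ^ n := by ring
  obtain ⟨x, hx⟩ := cauchySeq_tendsto_of_complete hcauchy
  have hfx : f x = x := by
    rcases hb with hcont | htcc
    · have h1 : Tendsto (fun n => f (u n)) atTop (𝓝 (f x)) :=
        (hcont.tendsto x).comp hx
      have h2 : Tendsto (fun n => u (n + 1)) atTop (𝓝 x) :=
        hx.comp (tendsto_add_atTop_nat 1)
      have h3 : (fun n => u (n + 1)) = fun n => f (u n) := by
        funext n; simp [hu, Function.iterate_succ_apply']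
      rw [h3] at h2
      exact tendsto_nhds_unique h1 h2
    · obtain ⟨φ, hφ, hcmpφ⟩ := htcc u x hucmp hx
      have hsub : Tendsto (fun k => u (φ k)) atTop (𝓝 x) :=
        hx.comp (hφ.tendsto_atTop)
      have hd0 : Tendsto (fun k => dist (f (u (φ k))) (f x)) atTop (𝓝 0) := by
        have hbd : ∀ k, dist (f (u (φ k))) (f x) ≤ α * dist (u (φ k)) x :=
          fun k => hcon _ _ (hcmpφ k)
        have hto : Tendsto (fun k => α * dist (u (φ k)) x) atTop (𝓝 0) := by
          have := (tendsto_iff_dist_tendsto_zero.mp hsub)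
          simpa using this.const_mul α
        exact squeeze_zero (fun k => dist_nonneg) hbd hto
      have h1 : Tendsto (fun k => f (u (φ k))) atTop (𝓝 (f x)) :=
        tendsto_iff_dist_tendsto_zero.mpr hd0
      have h2 : Tendsto (fun k => f (u (φ k))) atTop (𝓝 x) := by
        have h3 : (fun k => f (u (φ k))) = fun k => u (φ k + 1) := by
          funext k; simp [hu, Function.iterate_succ_apply']
        rw [h3]
        exact hx.comp (tendsto_atTop_mono (fun k => (hφ.le_apply).trans (Nat.le_succ _))
          tendsto_id) |>.comp tendsto_id
      exact tendsto_nhds_unique h1 h2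
  refine ⟨x, hfx, ?_⟩
  intro y hy
  -- uniqueness
  obtain ⟨k, e, hk2, _, he0, hek, hchain⟩ := he y x
  have hfix_it : ∀ n, f^[n] x = x := fun n => Function.iterate_fixed hfx n
  have hfiy_it : ∀ n, f^[n] y = y := fun n => Function.iterate_fixed hy n
  set S : ℝ := ∑ i ∈ Finset.range (k - 1), dist (e i) (e (i + 1)) with hS
  have key : ∀ n, dist y x ≤ α ^ n * S := by
    intro n
    have h0 : f^[n] (e 0) = y := by rw [he0, hy, hfiy_it]
    have hk : f^[n] (e (k - 1)) = x := by rw [hek, hfx, hfix_it]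
    calc dist y x = dist (f^[n] (e 0)) (f^[n] (e (k - 1))) := by rw [h0, hk]
      _ ≤ ∑ i ∈ Finset.range (k - 1), dist (f^[n] (e i)) (f^[n] (e (i + 1))) :=
          dist_le_range_sum_dist (fun i => f^[n] (e i)) (k - 1)
      _ ≤ ∑ i ∈ Finset.range (k - 1), α ^ n * dist (e i) (e (i + 1)) := by
          apply Finset.sum_le_sum
          intro i hi
          have hik : i + 1 < k := by
            have := Finset.mem_range.mp hi
            omega
          exact hdist_it n _ _ (hchain i hik)
      _ = α ^ n * S := by rw [hS, Finset.mul_sum]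
  have hto : Tendsto (fun n => α ^ n * S) atTop (𝓝 0) := by
    have := tendsto_pow_atTop_nhds_zero_of_lt_one hα0 hα1
    simpa using this.mul_const S
  have hle : dist y x ≤ 0 := ge_of_tendsto' hto key
  have : dist y x = 0 := le_antisymm hle dist_nonneg
  exact dist_eq_zero.mp this
end

section
/- (Ran–Reurings) Let (X, d, ≤) be an ordered metric space and f a self-map on X such that: (a) (X, d) is complete; (b) f is monotone (either increasing or decreasing); (c) f is continuous; (d) there exists x₀ ∈ X with x₀ ≺≻ f(x₀); (e) there exists α ∈ [0,1) such that d(f(x), f(y)) ≤ α·d(x, y) for all x, y ∈ X with x ≤ y; (f) every pair of elements of X has a lower bound and an upper bound. Then f has a unique fixed point x̄, and moreover for every x ∈ X the sequence of iterates fⁿ(x) converges to x̄. -/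
open Filter Topology

/-- Theorem 1.1 (Ran–Reurings). -/
theorem stmt14 {X : Type*} [MetricSpace X] [PartialOrder X] [CompleteSpace X]
    (f : X → X)
    (hb : Monotone f ∨ Antitone f)
    (hc : Continuous f)
    (hd : ∃ x₀ : X, Cmp x₀ (f x₀))
    (he : ∃ α : ℝ, 0 ≤ α ∧ α < 1 ∧
      ∀ x y : X, x ≤ y → dist (f x) (f y) ≤ α * dist x y)
    (hf : ∀ x y : X, (∃ z : X, z ≤ x ∧ z ≤ y) ∧ (∃ w : X, x ≤ w ∧ y ≤ w)) :
    ∃ z : X, f z = z ∧ (∀ w : X, f w = w → w = z) ∧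
      ∀ x : X, Tendsto (fun n => f^[n] x) atTop (𝓝 z) := by

  obtain ⟨α, hα0, hα1, hcon⟩ := he
  have hcmp : ∀ x y : X, Cmp x y → Cmp (f x) (f y) := by
    intro x y h
    rcases hb with hm | hm
    · rcases h with h | h
      · exact Or.inl (hm h)
      · exact Or.inr (hm h)
    · rcases h with h | h
      · exact Or.inr (hm h)
      · exact Or.inl (hm h)
  have hdist : ∀ x y : X, Cmp x y → dist (f x) (f y) ≤ α * dist x y := by
    intro x y h
    rcases h with h | h
    · exact hcon x y h
    · rw [dist_comm x y, dist_comm (f x) (f y)]; exact hcon y x h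
  have hiter : ∀ x y : X, Cmp x y → ∀ n, Cmp (f^[n] x) (f^[n] y) ∧
      dist (f^[n] x) (f^[n] y) ≤ α ^ n * dist x y := by
    intro x y h n
    induction n with
    | zero => simpa using h
    | succ n ih =>
      constructor
      · rw [Function.iterate_succ_apply', Function.iterate_succ_apply']
        exact hcmp _ _ ih.1
      · rw [Function.iterate_succ_apply', Function.iterate_succ_apply']
        calc dist (f (f^[n] x)) (f (f^[n] y)) ≤ α * dist (f^[n] x) (f^[n] y) :=
              hdist _ _ ih.1
          _ ≤ α * (α ^ n * dist x y) := mul_le_mul_of_nonneg_left ih.2 hα0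
          _ = α ^ (n + 1) * dist x y := by ring
  obtain ⟨x₀, hx₀⟩ := hd
  set u : ℕ → X := fun n => f^[n] x₀ with hu
  have hcauchy : CauchySeq u := by
    apply cauchySeq_of_le_geometric α (dist x₀ (f x₀)) hα1
    intro n
    have h := (hiter x₀ (f x₀) hx₀ n).2
    calc dist (u n) (u (n + 1)) = dist (f^[n] x₀) (f^[n] (f x₀)) := by
          rw [hu]; simp [Function.iterate_succ_apply]
      _ ≤ α ^ n * dist x₀ (f x₀) := h
      _ = dist x₀ (f x₀) * α ^ n := by ring
  obtain ⟨z, hz⟩ := cauchySeq_tendsto_of_complete hcauchy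
  have hfz : f z = z := by
    have h1 : Tendsto (fun n => f (u n)) atTop (𝓝 (f z)) := (hc.tendsto z).comp hz
    have h2 : Tendsto (fun n => u (n + 1)) atTop (𝓝 z) :=
      hz.comp (tendsto_add_atTop_nat 1)
    have heq : (fun n => f (u n)) = fun n => u (n + 1) := by
      funext n; rw [hu]; simp [Function.iterate_succ_apply']
    rw [heq] at h1
    exact tendsto_nhds_unique h1 h2
  have hconv : ∀ x : X, Tendsto (fun n => f^[n] x) atTop (𝓝 z) := by
    intro x
    obtain ⟨⟨w, hwx, hwx₀⟩, -⟩ := hf x x₀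
    have hb1 : ∀ n, dist (f^[n] x) z ≤
        α ^ n * dist x w + α ^ n * dist w x₀ + dist (u n) z := by
      intro n
      have h1 := (hiter x w (Or.inr hwx) n).2
      have h2 := (hiter w x₀ (Or.inl hwx₀) n).2
      calc dist (f^[n] x) z ≤ dist (f^[n] x) (f^[n] w) + dist (f^[n] w) (f^[n] x₀)
            + dist (f^[n] x₀) z := dist_triangle4 _ _ _ _
        _ ≤ α ^ n * dist x w + α ^ n * dist w x₀ + dist (u n) z := by
            rw [hu]; gcongr
    have hlim : Tendsto (fun n => α ^ n * dist x w + α ^ n * dist w x₀ + dist (u n) z)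
        atTop (𝓝 0) := by
      have hp : Tendsto (fun n : ℕ => α ^ n) atTop (𝓝 0) :=
        tendsto_pow_atTop_nhds_zero_of_lt_one hα0 hα1
      have hd0 : Tendsto (fun n => dist (u n) z) atTop (𝓝 0) :=
        tendsto_iff_dist_tendsto_zero.mp hz
      have := ((hp.mul_const (dist x w)).add (hp.mul_const (dist w x₀))).add hd0
      simpa using this
    have : Tendsto (fun n => dist (f^[n] x) z) atTop (𝓝 0) :=
      squeeze_zero (fun n => dist_nonneg) hb1 hlim
    exact tendsto_iff_dist_tendsto_zero.mpr this
  refine ⟨z, hfz, ?_, hconv⟩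
  intro w hw
  have h1 : Tendsto (fun n : ℕ => f^[n] w) atTop (𝓝 z) := hconv w
  have h2 : (fun n : ℕ => f^[n] w) = fun _ => w := by
    funext n
    exact Function.iterate_fixed hw n
  rw [h2] at h1
  exact tendsto_nhds_unique tendsto_const_nhds h1
end

section
/- (Nieto–Rodríguez-López) Let (X, d, ≤) be an ordered metric space and f a self-map on X such that: (a) (X, d) is complete; (b) f is monotone (either increasing or decreasing); (c) either f is continuous or (X, d, ≤) satisfies: for every sequence (x_n) converging to x whose consecutive terms are comparable, there exists a subsequence (x_{n_k}) every term of which is comparable to the limit x; (d) there exists x₀ ∈ X with x₀ ≺≻ f(x₀); (e) there exists α ∈ [0,1) such that d(f(x), f(y)) ≤ α·d(x, y) for all x, y ∈ X with x ≤ y; (f) every pair of elements of X has a lower bound or an upper bound. Then f has a unique fixed point. -/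
open Filter Topology

/-- Theorem 1.2 (Nieto–Rodríguez-López). -/
theorem stmt15 {X : Type*} [MetricSpace X] [PartialOrder X] [CompleteSpace X]
    (f : X → X)
    (hb : Monotone f ∨ Antitone f)
    (hc : Continuous f ∨ TCC X)
    (hd : ∃ x₀ : X, Cmp x₀ (f x₀))
    (he : ∃ α : ℝ, 0 ≤ α ∧ α < 1 ∧
      ∀ x y : X, x ≤ y → dist (f x) (f y) ≤ α * dist x y)
    (hf : ∀ x y : X, (∃ z : X, z ≤ x ∧ z ≤ y) ∨ (∃ z : X, x ≤ z ∧ y ≤ z)) :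
    ∃! x : X, f x = x := by
  obtain ⟨x₀, hx₀⟩ := hd
  obtain ⟨α, hα0, hα1, hcon⟩ := he
  have hcd : ∀ x y : X, Cmp x y → dist (f x) (f y) ≤ α * dist x y := by
    rintro x y (h | h)
    · exact hcon x y h
    · rw [dist_comm, dist_comm x y]; exact hcon y x h
  have hmc : ∀ x y : X, Cmp x y → Cmp (f x) (f y) := by
    rintro x y (h | h) <;> rcases hb with hm | hm
    · exact Or.inl (hm h)
    · exact Or.inr (hm h)
    · exact Or.inr (hm h)
    · exact Or.inl (hm h)
  set u : ℕ → X := fun n => f^[n] x₀ with hu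
  have hstep : ∀ n, u (n+1) = f (u n) := fun n => Function.iterate_succ_apply' f n x₀
  have hcmp : ∀ n, Cmp (u n) (u (n+1)) := by
    intro n
    induction n with
    | zero => simpa [hu] using hx₀
    | succ n ih =>
      have h := hmc _ _ ih
      rwa [← hstep n, ← hstep (n+1)] at h
  have hgeo : ∀ n, dist (u n) (u (n+1)) ≤ dist (u 0) (u 1) * α ^ n := by
    intro n
    induction n with
    | zero => simp
    | succ n ih =>
      have h := hcd _ _ (hcmp n)
      rw [← hstep n, ← hstep (n+1)] at h
      calc dist (u (n+1)) (u (n+2)) ≤ α * dist (u n) (u (n+1)) := h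
        _ ≤ α * (dist (u 0) (u 1) * α ^ n) := by
              exact mul_le_mul_of_nonneg_left ih hα0
        _ = dist (u 0) (u 1) * α ^ (n+1) := by ring
  have hcauchy : CauchySeq u := cauchySeq_of_le_geometric α _ hα1 hgeo
  obtain ⟨l, hl⟩ := cauchySeq_tendsto_of_complete hcauchy
  have hshift : Tendsto (fun n => u (n+1)) atTop (𝓝 l) :=
    hl.comp (tendsto_add_atTop_nat 1)
  have hfix : f l = l := by
    rcases hc with hcont | htcc
    · have h1 : Tendsto (fun n => f (u n)) atTop (𝓝 (f l)) := (hcont.tendsto l).comp hl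
      have h2 : Tendsto (fun n => u (n+1)) atTop (𝓝 (f l)) := by
        simpa only [hstep] using h1
      exact tendsto_nhds_unique h2 hshift
    · obtain ⟨φ, hφ, hcl⟩ := htcc u l hcmp hl
      have h1 : Tendsto (fun k => u (φ k + 1)) atTop (𝓝 l) :=
        hshift.comp hφ.tendsto_atTop
      have h2 : Tendsto (fun k => u (φ k + 1)) atTop (𝓝 (f l)) := by
        rw [tendsto_iff_dist_tendsto_zero]
        have hbd : ∀ k, dist (u (φ k + 1)) (f l) ≤ α * dist (u (φ k)) l := by
          intro k; rw [hstep]; exact hcd _ _ (hcl k)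
        have hz : Tendsto (fun k => α * dist (u (φ k)) l) atTop (𝓝 0) := by
          have := tendsto_iff_dist_tendsto_zero.mp (hl.comp hφ.tendsto_atTop)
          simpa using this.const_mul α
        exact squeeze_zero (fun k => dist_nonneg) hbd hz
      exact tendsto_nhds_unique h2 h1
  have key : ∀ (z a : X), f a = a → Cmp z a →
      Tendsto (fun n => f^[n] z) atTop (𝓝 a) := by
    intro z a ha hza
    have main : ∀ n, Cmp (f^[n] z) a ∧ dist (f^[n] z) a ≤ α ^ n * dist z a := by
      intro n
      induction n with
      | zero => simpa using hza
      | succ n ih =>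
        obtain ⟨ihc, ihd⟩ := ih
        have hc1 : Cmp (f^[n+1] z) a := by
          rw [Function.iterate_succ_apply']
          have := hmc _ _ ihc
          rwa [ha] at this
        refine ⟨hc1, ?_⟩
        rw [Function.iterate_succ_apply']
        calc dist (f (f^[n] z)) a = dist (f (f^[n] z)) (f a) := by rw [ha]
          _ ≤ α * dist (f^[n] z) a := hcd _ _ ihc
          _ ≤ α * (α ^ n * dist z a) := mul_le_mul_of_nonneg_left ihd hα0
          _ = α ^ (n+1) * dist z a := by ring
    rw [tendsto_iff_dist_tendsto_zero]
    have hz : Tendsto (fun n => α ^ n * dist z a) atTop (𝓝 0) := by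
      simpa using (tendsto_pow_atTop_nhds_zero_of_lt_one hα0 hα1).mul_const (dist z a)
    exact squeeze_zero (fun n => dist_nonneg) (fun n => (main n).2) hz
  refine ⟨l, hfix, ?_⟩
  intro y hy
  obtain (⟨z, hz1, hz2⟩ | ⟨z, hz1, hz2⟩) := hf y l
  · exact tendsto_nhds_unique (key z y hy (Or.inl hz1)) (key z l hfix (Or.inl hz2))
  · exact tendsto_nhds_unique (key z y hy (Or.inr hz1)) (key z l hfix (Or.inr hz2))
end

section
/- (Nieto–Rodríguez-López, comparable version) Let (X, d, ≤) be an ordered metric space and f a self-map on X such that: (a) (X, d) is complete; (b) for all x, y ∈ X, x ≤ y implies f(x) ≤ f(y) or f(x) ≥ f(y); (c) either f is continuous or (X, d, ≤) satisfies: for every sequence (x_n) converging to x whose consecutive terms are comparable, there exists a subsequence (x_{n_k}) every term of which is comparable to the limit x; (d) there exists x₀ ∈ X with x₀ ≺≻ f(x₀); (e) there exists α ∈ [0,1) such that d(f(x), f(y)) ≤ α·d(x, y) for all x, y ∈ X with x ≤ y; (f) for every pair x, y ∈ X there exists z ∈ X comparable to both x and y. Then f has a unique fixed point x̄, and moreover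 for every x ∈ X the sequence of iterates fⁿ(x) converges to x̄. -/
open Filter Topology

/-- Theorem 1.3 (Nieto–Rodríguez-López, comparable version). -/
theorem stmt16 {X : Type*} [MetricSpace X] [PartialOrder X] [CompleteSpace X]
    (f : X → X)
    (hb : ∀ x y : X, x ≤ y → Cmp (f x) (f y))
    (hc : Continuous f ∨ TCC X)
    (hd : ∃ x₀ : X, Cmp x₀ (f x₀))
    (he : ∃ α : ℝ, 0 ≤ α ∧ α < 1 ∧
      ∀ x y : X, x ≤ y → dist (f x) (f y) ≤ α * dist x y)
    (hf : ∀ x y : X, ∃ z : X, Cmp x z ∧ Cmp y z) :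
    ∃ z : X, f z = z ∧ (∀ w : X, f w = w → w = z) ∧
      ∀ x : X, Tendsto (fun n => f^[n] x) atTop (𝓝 z) := by
  obtain ⟨α, hα0, hα1, hcontr⟩ := he
  obtain ⟨x₀, hx₀⟩ := hd
  -- comparability is preserved by f
  have hcmp : ∀ x y : X, Cmp x y → Cmp (f x) (f y) := by
    intro x y h
    rcases h with h | h
    · exact hb x y h
    · exact (hb y x h).symm
  -- contraction for comparable pairs
  have hc1 : ∀ x y : X, Cmp x y → dist (f x) (f y) ≤ α * dist x y := by
    intro x y h
    rcases h with h | h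
    · exact hcontr x y h
    · rw [dist_comm (f x), dist_comm x]
      exact hcontr y x h
  -- iterated contraction for comparable pairs
  have key : ∀ (x y : X), Cmp x y → ∀ n : ℕ,
      Cmp (f^[n] x) (f^[n] y) ∧ dist (f^[n] x) (f^[n] y) ≤ α ^ n * dist x y := by
    intro x y h n
    induction n with
    | zero => simpa using h
    | succ n ih =>
      refine ⟨?_, ?_⟩
      · rw [Function.iterate_succ_apply', Function.iterate_succ_apply']
        exact hcmp _ _ ih.1
      · rw [Function.iterate_succ_apply', Function.iterate_succ_apply']
        calc dist (f (f^[n] x)) (f (f^[n] y)) ≤ α * dist (f^[n] x) (f^[n] y) :=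
              hc1 _ _ ih.1
          _ ≤ α * (α ^ n * dist x y) := by
              exact mul_le_mul_of_nonneg_left ih.2 hα0
          _ = α ^ (n + 1) * dist x y := by ring
  set u : ℕ → X := fun n => f^[n] x₀ with hu
  have hucmp : ∀ n, Cmp (u n) (u (n + 1)) := by
    intro n
    have := (key x₀ (f x₀) hx₀ n).1
    simpa [hu, Function.iterate_succ_apply] using this
  have hcauchy : CauchySeq u := by
    apply cauchySeq_of_le_geometric α (dist x₀ (f x₀)) hα1
    intro n
    have := (key x₀ (f x₀) hx₀ n).2
    rw [mul_comm]
    simpa [hu, Function.iterate_succ_apply] using this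
  obtain ⟨z, hz⟩ := cauchySeq_tendsto_of_complete hcauchy
  have hzfix : f z = z := by
    rcases hc with hcont | htcc
    · -- continuous case
      have h1 : Tendsto (fun n => f (u n)) atTop (𝓝 (f z)) :=
        (hcont.tendsto z).comp hz
      have h2 : Tendsto (fun n => f (u n)) atTop (𝓝 z) := by
        have h := hz.comp (tendsto_add_atTop_nat 1)
        have heq : (u ∘ fun n => n + 1) = fun n => f (u n) := by
          funext n; simp [hu, Function.comp, Function.iterate_succ_apply']
        rwa [heq] at h
      exact tendsto_nhds_unique h1 h2
    · -- TCC case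
      obtain ⟨φ, hφmono, hφcmp⟩ := htcc u z hucmp hz
      have hzφ : Tendsto (fun k => u (φ k)) atTop (𝓝 z) :=
        hz.comp (hφmono.tendsto_atTop)
      have hφ1 : Tendsto (fun k => φ k + 1) atTop atTop :=
        tendsto_atTop_mono (fun k => Nat.le_succ (φ k)) hφmono.tendsto_atTop
      have hzφ1 : Tendsto (fun k => u (φ k + 1)) atTop (𝓝 z) := hz.comp hφ1
      have hT : Tendsto (fun k => α * dist z (u (φ k)) + dist (u (φ k + 1)) z)
          atTop (𝓝 0) := by
        have h1 : Tendsto (fun k => dist z (u (φ k))) atTop (𝓝 0) := by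
          simpa using (tendsto_const_nhds (x := z)).dist hzφ
        have h2 : Tendsto (fun k => dist (u (φ k + 1)) z) atTop (𝓝 0) := by
          simpa using hzφ1.dist (tendsto_const_nhds (x := z))
        simpa using (h1.const_mul α).add h2
      have hbound : ∀ k, dist (f z) z ≤ α * dist z (u (φ k)) + dist (u (φ k + 1)) z := by
        intro k
        have h1 : dist (f z) (f (u (φ k))) ≤ α * dist z (u (φ k)) :=
          hc1 _ _ (hφcmp k).symm
        have h2 : f (u (φ k)) = u (φ k + 1) := by
          simp [hu, Function.iterate_succ_apply']
        calc dist (f z) z ≤ dist (f z) (f (u (φ k))) + dist (f (u (φ k))) z :=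
              dist_triangle _ _ _
          _ ≤ α * dist z (u (φ k)) + dist (u (φ k + 1)) z := by
              rw [h2] at h1 ⊢; exact add_le_add h1 le_rfl
      have : dist (f z) z ≤ 0 := ge_of_tendsto hT (Filter.Eventually.of_forall hbound)
      have : dist (f z) z = 0 := le_antisymm this dist_nonneg
      exact eq_of_dist_eq_zero this
  have hconv : ∀ x : X, Tendsto (fun n => f^[n] x) atTop (𝓝 z) := by
    intro x
    obtain ⟨w, hxw, hzw⟩ := hf x z
    have hzn : ∀ n, f^[n] z = z := fun n => Function.iterate_fixed hzfix n
    have hbound : ∀ n, dist (f^[n] x) z ≤ α ^ n * (dist x w + dist w z) := by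
      intro n
      calc dist (f^[n] x) z ≤ dist (f^[n] x) (f^[n] w) + dist (f^[n] w) (f^[n] z) := by
            rw [hzn n]; exact dist_triangle _ _ _
        _ ≤ α ^ n * dist x w + α ^ n * dist w z :=
            add_le_add (key x w hxw n).2 (key w z hzw.symm n).2
        _ = α ^ n * (dist x w + dist w z) := by ring
    have hgeo : Tendsto (fun n => α ^ n * (dist x w + dist w z)) atTop (𝓝 0) := by
      simpa using (tendsto_pow_atTop_nhds_zero_of_lt_one hα0 hα1).mul_const
        (dist x w + dist w z)
    rw [tendsto_iff_dist_tendsto_zero]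
    exact squeeze_zero (fun n => dist_nonneg) hbound hgeo
  refine ⟨z, hzfix, ?_, hconv⟩
  intro w hw
  have : Tendsto (fun n => f^[n] w) atTop (𝓝 z) := hconv w
  have h2 : (fun n : ℕ => f^[n] w) = fun _ => w := by
    funext n; exact Function.iterate_fixed hw n
  rw [h2] at this
  exact tendsto_const_nhds_iff.mp this
end

section
/- (Turinici) Let (X, d, ≤) be an ordered metric space and f a self-map on X such that: (a) (X, d) is complete; (b) for all x, y ∈ X, x ≺≻ y implies f(x) ≺≻ f(y); (c) f is continuous; (d) there exists x₀ ∈ X with x₀ ≺≻ f(x₀); (e) there exists α ∈ [0,1) such that d(f(x), f(y)) ≤ α·d(x, y) for all x, y ∈ X with x ≤ y; (f) for each x, y ∈ X, the set C(x, y, ≺≻) of ≺≻-chains between x and y in X is nonempty. Then f has a unique fixed point z, and moreover for each x ∈ X the sequence of iterates fⁿ(x) converges to z. -/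
open Filter Topology

/-- Theorem 1.4 (Turinici, continuous case). -/
theorem stmt17 {X : Type*} [MetricSpace X] [PartialOrder X] [CompleteSpace X]
    (f : X → X)
    (hb : ∀ x y : X, Cmp x y → Cmp (f x) (f y))
    (hc : Continuous f)
    (hd : ∃ x₀ : X, Cmp x₀ (f x₀))
    (he : ∃ α : ℝ, 0 ≤ α ∧ α < 1 ∧
      ∀ x y : X, x ≤ y → dist (f x) (f y) ≤ α * dist x y)
    (hf : ∀ x y : X, ChainIn (Set.univ : Set X) x y) :
    ∃ z : X, f z = z ∧ (∀ w : X, f w = w → w = z) ∧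
      ∀ x : X, Tendsto (fun n => f^[n] x) atTop (𝓝 z) := by
  obtain ⟨α, hα0, hα1, hcontr⟩ := he
  have key : ∀ x y : X, Cmp x y → dist (f x) (f y) ≤ α * dist x y := by
    rintro x y (h | h)
    · exact hcontr x y h
    · rw [dist_comm, dist_comm x y]; exact hcontr y x h
  have keyn : ∀ n, ∀ x y : X, Cmp x y →
      dist (f^[n] x) (f^[n] y) ≤ α ^ n * dist x y := by
    intro n
    induction n with
    | zero => simp
    | succ n ih =>
      intro x y h
      have hc2 : Cmp (f x) (f y) := hb x y h
      calc dist (f^[n + 1] x) (f^[n + 1] y)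
          = dist (f^[n] (f x)) (f^[n] (f y)) := by
            simp [Function.iterate_succ_apply]
        _ ≤ α ^ n * dist (f x) (f y) := ih (f x) (f y) hc2
        _ ≤ α ^ n * (α * dist x y) :=
            mul_le_mul_of_nonneg_left (key x y h) (pow_nonneg hα0 n)
        _ = α ^ (n + 1) * dist x y := by ring
  obtain ⟨x₀, hx₀⟩ := hd
  have hCauchy : CauchySeq (fun n => f^[n] x₀) := by
    apply cauchySeq_of_le_geometric α (dist x₀ (f x₀)) hα1
    intro n
    have := keyn n x₀ (f x₀) hx₀
    calc dist (f^[n] x₀) (f^[n + 1] x₀)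
        = dist (f^[n] x₀) (f^[n] (f x₀)) := by
          rw [Function.iterate_succ_apply]
      _ ≤ α ^ n * dist x₀ (f x₀) := this
      _ = dist x₀ (f x₀) * α ^ n := by ring
  obtain ⟨z, hz⟩ := cauchySeq_tendsto_of_complete hCauchy
  have hfz : f z = z := by
    have h1 : Tendsto (fun n => f (f^[n] x₀)) atTop (𝓝 (f z)) :=
      (hc.tendsto z).comp hz
    have h2 : Tendsto (fun n => f^[n + 1] x₀) atTop (𝓝 z) :=
      hz.comp (tendsto_add_atTop_nat 1)
    have h3 : Tendsto (fun n => f (f^[n] x₀)) atTop (𝓝 z) := by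
      simpa [Function.iterate_succ_apply'] using h2
    exact tendsto_nhds_unique h1 h3
  have htend : ∀ x : X, Tendsto (fun n => f^[n] x) atTop (𝓝 z) := by
    intro x
    obtain ⟨k, e, hk, -, he0, hek, hchain⟩ := hf x z
    have chainbound : ∀ n, ∀ j, j ≤ k - 1 →
        dist (f^[n] (e 0)) (f^[n] (e j)) ≤
          α ^ n * ∑ i ∈ Finset.range j, dist (e i) (e (i + 1)) := by
      intro n j
      induction j with
      | zero => simp
      | succ j ih =>
        intro hj
        have hj' : j ≤ k - 1 := by omega
        have hcmp : Cmp (e j) (e (j + 1)) := hchain j (by omega)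
        calc dist (f^[n] (e 0)) (f^[n] (e (j + 1)))
            ≤ dist (f^[n] (e 0)) (f^[n] (e j)) +
              dist (f^[n] (e j)) (f^[n] (e (j + 1))) := dist_triangle _ _ _
          _ ≤ α ^ n * ∑ i ∈ Finset.range j, dist (e i) (e (i + 1)) +
              α ^ n * dist (e j) (e (j + 1)) :=
                add_le_add (ih hj') (keyn n _ _ hcmp)
          _ = α ^ n * ∑ i ∈ Finset.range (j + 1), dist (e i) (e (i + 1)) := by
              rw [Finset.sum_range_succ]; ring
    set D := ∑ i ∈ Finset.range (k - 1), dist (e i) (e (i + 1)) with hD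
    have hbound : ∀ n, dist (f^[n] x) z ≤ α ^ n * D := by
      intro n
      have h := chainbound n (k - 1) le_rfl
      rw [he0, hek, Function.iterate_fixed hfz] at h
      exact h
    rw [tendsto_iff_dist_tendsto_zero]
    have hgeo : Tendsto (fun n => α ^ n * D) atTop (𝓝 0) := by
      have := (tendsto_pow_atTop_nhds_zero_of_lt_one hα0 hα1).mul_const D
      simpa using this
    exact squeeze_zero (fun n => dist_nonneg) hbound hgeo
  refine ⟨z, hfz, ?_, htend⟩
  intro w hw
  have h1 : Tendsto (fun n => f^[n] w) atTop (𝓝 z) := htend w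
  have h2 : (fun n : ℕ => f^[n] w) = fun _ => w := by
    funext n; exact Function.iterate_fixed hw n
  rw [h2] at h1
  exact (tendsto_nhds_unique h1 tendsto_const_nhds).symm
end

section
/- (Turinici) Let (X, d, ≤) be an ordered metric space and f a self-map on X such that: (a) (X, d) is complete; (b) for all x, y ∈ X, x ≺≻ y implies f(x) ≺≻ f(y); (c) (X, d, ≤) satisfies: for every sequence (x_n) converging to x whose consecutive terms are comparable, there exists a subsequence (x_{n_k}) every term of which is comparable to the limit x; (d) there exists x₀ ∈ X with x₀ ≺≻ f(x₀); (e) there exists α ∈ [0,1) such that d(f(x), f(y)) ≤ α·d(x, y) for all x, y ∈ X with x ≤ y; (f) for each x, y ∈ X, the set C(x, y, ≺≻) of ≺≻-chains between x and y in X is nonempty. Then f has a unique fixed point z, and moreover for each x ∈ X the sequence of iterates fⁿ(x) converges to z. -/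
open Filter Topology

/-- Theorem 1.5 (Turinici, TCC case). -/
theorem stmt18 {X : Type*} [MetricSpace X] [PartialOrder X] [CompleteSpace X]
    (f : X → X)
    (hb : ∀ x y : X, Cmp x y → Cmp (f x) (f y))
    (hc : TCC X)
    (hd : ∃ x₀ : X, Cmp x₀ (f x₀))
    (he : ∃ α : ℝ, 0 ≤ α ∧ α < 1 ∧
      ∀ x y : X, x ≤ y → dist (f x) (f y) ≤ α * dist x y)
    (hf : ∀ x y : X, ChainIn (Set.univ : Set X) x y) :
    ∃ z : X, f z = z ∧ (∀ w : X, f w = w → w = z) ∧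
      ∀ x : X, Tendsto (fun n => f^[n] x) atTop (𝓝 z) := by
  obtain ⟨α, hα0, hα1, hαc⟩ := he
  obtain ⟨x₀, hx₀⟩ := hd
  have hcmp : ∀ x y : X, Cmp x y → dist (f x) (f y) ≤ α * dist x y := by
    intro x y h
    rcases h with h | h
    · exact hαc x y h
    · rw [dist_comm, dist_comm x y]; exact hαc y x h
  have hiterCmp : ∀ (n : ℕ) (x y : X), Cmp x y → Cmp (f^[n] x) (f^[n] y) := by
    intro n
    induction n with
    | zero => intro x y h; simpa using h
    | succ n ih =>
      intro x y h
      simp only [Function.iterate_succ_apply']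
      exact hb _ _ (ih x y h)
  have hiter : ∀ (n : ℕ) (x y : X), Cmp x y →
      dist (f^[n] x) (f^[n] y) ≤ α ^ n * dist x y := by
    intro n
    induction n with
    | zero => intro x y _; simp
    | succ n ih =>
      intro x y h
      simp only [Function.iterate_succ_apply']
      calc dist (f (f^[n] x)) (f (f^[n] y)) ≤ α * dist (f^[n] x) (f^[n] y) :=
            hcmp _ _ (hiterCmp n x y h)
        _ ≤ α * (α ^ n * dist x y) := mul_le_mul_of_nonneg_left (ih x y h) hα0
        _ = α ^ (n + 1) * dist x y := by ring
  set u : ℕ → X := fun n => f^[n] x₀ with hu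
  have hucmp : ∀ n, Cmp (u n) (u (n + 1)) := by
    intro n
    have := hiterCmp n x₀ (f x₀) hx₀
    simpa [hu, Function.iterate_succ_apply] using this
  have hcauchy : CauchySeq u := by
    apply cauchySeq_of_le_geometric α (dist x₀ (f x₀)) hα1
    intro n
    have := hiter n x₀ (f x₀) hx₀
    simpa [hu, Function.iterate_succ_apply, mul_comm] using this
  obtain ⟨z, hz⟩ := cauchySeq_tendsto_of_complete hcauchy
  obtain ⟨φ, hφmono, hφcmp⟩ := hc u z hucmp hz
  have hφtend : Tendsto (fun k => u (φ k)) atTop (𝓝 z) :=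
    hz.comp hφmono.tendsto_atTop
  have hdistz : Tendsto (fun k => dist (u (φ k)) z) atTop (𝓝 0) := by
    rw [← tendsto_iff_dist_tendsto_zero]
    exact hφtend
  have hfz : f z = z := by
    have h1 : Tendsto (fun k => u (φ k + 1)) atTop (𝓝 z) := by
      exact hz.comp (tendsto_atTop_mono
        (fun k => le_trans hφmono.le_apply (Nat.le_succ _)) tendsto_id)
    have h2 : Tendsto (fun k => f (u (φ k))) atTop (𝓝 z) := by
      have : (fun k => f (u (φ k))) = fun k => u (φ k + 1) := by
        funext k
        simp [hu, Function.iterate_succ_apply']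
      rw [this]; exact h1
    have h3 : Tendsto (fun k => f (u (φ k))) atTop (𝓝 (f z)) := by
      rw [tendsto_iff_dist_tendsto_zero]
      apply squeeze_zero (fun k => dist_nonneg) (fun k => hcmp _ _ (hφcmp k))
      have := hdistz.const_mul α
      simpa using this
    exact tendsto_nhds_unique h3 h2
  have hconv : ∀ x : X, Tendsto (fun n => f^[n] x) atTop (𝓝 z) := by
    intro x
    obtain ⟨k, e, hk2, _, he0, hek, hecmp⟩ := hf x z
    have key : ∀ j, j < k → ∃ C, 0 ≤ C ∧
        ∀ n, dist (f^[n] (e 0)) (f^[n] (e j)) ≤ C * α ^ n := by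
      intro j
      induction j with
      | zero => intro _; exact ⟨0, le_refl 0, fun n => by simp⟩
      | succ j ih =>
        intro hjk
        obtain ⟨C, hC0, hC⟩ := ih (lt_trans (Nat.lt_succ_self j) hjk)
        refine ⟨C + dist (e j) (e (j + 1)), by positivity, fun n => ?_⟩
        calc dist (f^[n] (e 0)) (f^[n] (e (j + 1)))
            ≤ dist (f^[n] (e 0)) (f^[n] (e j)) +
              dist (f^[n] (e j)) (f^[n] (e (j + 1))) := dist_triangle _ _ _
          _ ≤ C * α ^ n + α ^ n * dist (e j) (e (j + 1)) :=
              add_le_add (hC n) (hiter n _ _ (hecmp j hjk))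
          _ = (C + dist (e j) (e (j + 1))) * α ^ n := by ring
    obtain ⟨C, hC0, hC⟩ := key (k - 1) (Nat.sub_lt (by omega) one_pos)
    rw [tendsto_iff_dist_tendsto_zero]
    have hlim : Tendsto (fun n => C * α ^ n) atTop (𝓝 0) := by
      have := (tendsto_pow_atTop_nhds_zero_of_lt_one hα0 hα1).const_mul C
      simpa using this
    apply squeeze_zero (fun n => dist_nonneg) (fun n => ?_) hlim
    calc dist (f^[n] x) z = dist (f^[n] (e 0)) (f^[n] (e (k - 1))) := by
          rw [he0, hek, Function.iterate_fixed hfz]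
      _ ≤ C * α ^ n := hC n
  refine ⟨z, hfz, fun w hw => ?_, hconv⟩
  have : Tendsto (fun n => f^[n] w) atTop (𝓝 w) := by
    have hfix : ∀ n, f^[n] w = w := fun n => Function.iterate_fixed hw n
    simp only [hfix]
    exact (tendsto_const_nhds : Tendsto (fun _ : ℕ => w) atTop (𝓝 w))
  exact tendsto_nhds_unique this (hconv w)
end

section
/- (Dorić–Kadelburg–Radenović) Let (X, d, ≤) be an ordered metric space and f a self-map on X such that: (a) (X, d) is complete; (b) for all x, y ∈ X, x ≺≻ y implies f(x) ≺≻ f(y); (c) either f is continuous or (X, d, ≤) satisfies: whenever a sequence (x_n) converges to x in X, then x_n ≺≻ x for all sufficiently large n; (d) there exists x₀ ∈ X with x₀ ≺≻ f(x₀); (e) there exists α ∈ [0,1) such that d(f(x), f(y)) ≤ α·d(x, y) for all x, y ∈ X with x ≺≻ y. Then f has a fixed point in X. Moreover, if (f) for each x, y ∈ X there exists z ∈ X with x ≺≻ z and y ≺≻ z, then the fixed point u is unique and for each x ∈ X the sequence of iterates fⁿ(x) converges to u. -/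
open Filter Topology

section Aux

variable {X : Type*} [MetricSpace X] [PartialOrder X]

set_option linter.unusedSectionVars false in
lemma cmp_iter {f : X → X} (hb : ∀ x y : X, Cmp x y → Cmp (f x) (f y))
    {a b : X} (h : Cmp a b) : ∀ n, Cmp (f^[n] a) (f^[n] b) := by
  intro n
  induction n with
  | zero => simpa using h
  | succ n ih =>
    rw [Function.iterate_succ_apply', Function.iterate_succ_apply']
    exact hb _ _ ih

lemma dist_iter {f : X → X} (hb : ∀ x y : X, Cmp x y → Cmp (f x) (f y))
    {α : ℝ} (hα0 : 0 ≤ α)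
    (hcon : ∀ x y : X, Cmp x y → dist (f x) (f y) ≤ α * dist x y)
    {a b : X} (h : Cmp a b) : ∀ n, dist (f^[n] a) (f^[n] b) ≤ α ^ n * dist a b := by
  intro n
  induction n with
  | zero => simp
  | succ n ih =>
    rw [Function.iterate_succ_apply', Function.iterate_succ_apply']
    calc dist (f (f^[n] a)) (f (f^[n] b)) ≤ α * dist (f^[n] a) (f^[n] b) :=
          hcon _ _ (cmp_iter hb h n)
      _ ≤ α * (α ^ n * dist a b) := by
          exact mul_le_mul_of_nonneg_left ih hα0
      _ = α ^ (n + 1) * dist a b := by ring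

end Aux

/-- Theorem 1.6 (Dorić–Kadelburg–Radenović). -/
theorem stmt19 {X : Type*} [MetricSpace X] [PartialOrder X] [CompleteSpace X]
    (f : X → X)
    (hb : ∀ x y : X, Cmp x y → Cmp (f x) (f y))
    (hc : Continuous f ∨
      ∀ (x : ℕ → X) (l : X), Tendsto x atTop (𝓝 l) → ∀ᶠ n in atTop, Cmp (x n) l)
    (hd : ∃ x₀ : X, Cmp x₀ (f x₀))
    (he : ∃ α : ℝ, 0 ≤ α ∧ α < 1 ∧
      ∀ x y : X, Cmp x y → dist (f x) (f y) ≤ α * dist x y) :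
    (∃ x : X, f x = x) ∧
      ((∀ x y : X, ∃ z : X, Cmp x z ∧ Cmp y z) →
        ∃ u : X, f u = u ∧ (∀ w : X, f w = w → w = u) ∧
          ∀ x : X, Tendsto (fun n => f^[n] x) atTop (𝓝 u)) := by
  obtain ⟨x₀, hx₀⟩ := hd
  obtain ⟨α, hα0, hα1, hcon⟩ := he
  set s : ℕ → X := fun n => f^[n] x₀ with hs
  have hcmp : ∀ n, Cmp (s n) (s (n + 1)) := by
    intro n
    show Cmp (f^[n] x₀) (f^[n + 1] x₀)
    rw [Function.iterate_succ_apply]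
    exact cmp_iter hb hx₀ n
  have hdist : ∀ n, dist (s n) (s (n + 1)) ≤ dist x₀ (f x₀) * α ^ n := by
    intro n
    show dist (f^[n] x₀) (f^[n + 1] x₀) ≤ dist x₀ (f x₀) * α ^ n
    rw [Function.iterate_succ_apply, mul_comm]
    exact dist_iter hb hα0 hcon hx₀ n
  have hcauchy : CauchySeq s := cauchySeq_of_le_geometric α _ hα1 hdist
  obtain ⟨u, hu⟩ := cauchySeq_tendsto_of_complete hcauchy
  have hs_succ : Tendsto (fun n => s (n + 1)) atTop (𝓝 u) :=
    hu.comp (tendsto_add_atTop_nat 1)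
  have hfix : f u = u := by
    rcases hc with hcont | htcc
    · have h1 : Tendsto (fun n => f (s n)) atTop (𝓝 (f u)) :=
        (hcont.tendsto u).comp hu
      have h2 : (fun n => f (s n)) = fun n => s (n + 1) := by
        funext n; simp [hs, ← Function.iterate_succ_apply']
      rw [h2] at h1
      exact tendsto_nhds_unique h1 hs_succ
    · have hev := htcc s u hu
      have key : Tendsto (fun n => α * dist (s n) u + dist (s (n + 1)) u)
          atTop (𝓝 0) := by
        have h1 : Tendsto (fun n => dist (s n) u) atTop (𝓝 0) :=
          tendsto_iff_dist_tendsto_zero.mp hu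
        have h2 : Tendsto (fun n => dist (s (n + 1)) u) atTop (𝓝 0) :=
          tendsto_iff_dist_tendsto_zero.mp hs_succ
        have := (h1.const_mul α).add h2
        simpa using this
      have hbound : ∀ᶠ n in atTop,
          dist (f u) u ≤ α * dist (s n) u + dist (s (n + 1)) u := by
        filter_upwards [hev] with n hn
        have hfs : f (s n) = s (n + 1) := by
          simp [hs, ← Function.iterate_succ_apply']
        calc dist (f u) u ≤ dist (f u) (f (s n)) + dist (f (s n)) u :=
              dist_triangle _ _ _
          _ ≤ α * dist (s n) u + dist (s (n + 1)) u := by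
              have h3 : dist (f u) (f (s n)) ≤ α * dist u (s n) :=
                hcon _ _ hn.symm
              rw [dist_comm u (s n)] at h3
              rw [← hfs]
              exact add_le_add h3 le_rfl
      have : dist (f u) u ≤ 0 :=
        le_of_tendsto_of_tendsto tendsto_const_nhds key hbound
      have : dist (f u) u = 0 := le_antisymm this dist_nonneg
      exact dist_eq_zero.mp this
  refine ⟨⟨u, hfix⟩, fun hf => ?_⟩
  have hconv : ∀ x : X, Tendsto (fun n => f^[n] x) atTop (𝓝 u) := by
    intro x
    obtain ⟨z, hxz, huz⟩ := hf x u
    have hiter_u : ∀ n : ℕ, f^[n] u = u := fun n => Function.iterate_fixed hfix n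
    have hbd : ∀ n : ℕ, dist (f^[n] x) u ≤ (dist x z + dist u z) * α ^ n := by
      intro n
      calc dist (f^[n] x) u ≤ dist (f^[n] x) (f^[n] z) + dist (f^[n] z) (f^[n] u) := by
            rw [hiter_u]; exact dist_triangle _ _ _
        _ ≤ α ^ n * dist x z + α ^ n * dist u z := by
            refine add_le_add (dist_iter hb hα0 hcon hxz n) ?_
            rw [dist_comm (f^[n] z) (f^[n] u)]
            exact dist_iter hb hα0 hcon huz n
        _ = (dist x z + dist u z) * α ^ n := by ring
    have hpow : Tendsto (fun n : ℕ => (dist x z + dist u z) * α ^ n) atTop (𝓝 0) := by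
      have := tendsto_pow_atTop_nhds_zero_of_lt_one hα0 hα1
      simpa using this.const_mul (dist x z + dist u z)
    refine tendsto_iff_dist_tendsto_zero.mpr ?_
    exact squeeze_zero (fun n => dist_nonneg) hbd hpow
  refine ⟨u, hfix, fun w hw => ?_, hconv⟩
  have : Tendsto (fun n => f^[n] w) atTop (𝓝 u) := hconv w
  have hw' : (fun n => f^[n] w) = fun _ => w := by
    funext n; exact Function.iterate_fixed hw n
  rw [hw'] at this
  exact tendsto_nhds_unique tendsto_const_nhds this
end
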